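/- arXiv:1006.1661 — 2 statements merged into one kernel-verified Lean document; each statement's English description precedes it below -/
import Mathlib

section
/- During the execution of the LLL algorithm, A = maxᵢ ‖b̂ᵢ‖² is non-increasing: after a swap of b_{k-1} and b_k, the new maximum of the squared Gram-Schmidt norms is at most the old maximum. -/
/-- Gram-Schmidt orthogonalization of a family of vectors in ℂⁿ. -/
noncomputable def gso {n : ℕ} (b : Fin n → EuclideanSpace ℂ (Fin n)) :
    Fin n → EuclideanSpace ℂ (Fin n) :=
  @InnerProductSpace.gramSchmidt ℂ _ _ _ _ (Fin n) _ _ (inferInstance : WellFoundedLT (Fin n)) b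

/-- Gram-Schmidt coefficient μ_{i,j} = ⟨bᵢ, b̂ⱼ⟩ / ‖b̂ⱼ‖². -/
noncomputable def mu {n : ℕ} (b : Fin n → EuclideanSpace ℂ (Fin n)) (i j : Fin n) : ℂ :=
  (inner ℂ (gso b j) (b i) : ℂ) / ((‖gso b j‖ ^ 2 : ℝ) : ℂ)

section Aux

variable {n : ℕ}

theorem gso_def (b : Fin n → EuclideanSpace ℂ (Fin n)) (m : Fin n) :
    gso b m = b m - ∑ t ∈ Finset.Iio m,
      (Submodule.orthogonalProjectionOnto (Submodule.span ℂ {gso b t}) (b m) : EuclideanSpace ℂ (Fin n)) :=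
  @InnerProductSpace.gramSchmidt_def ℂ _ _ _ _ (Fin n) _ _ (inferInstance : WellFoundedLT (Fin n)) b m

theorem gso_span (b : Fin n → EuclideanSpace ℂ (Fin n)) (m : Fin n) :
    Submodule.span ℂ (gso b '' Set.Iio m) = Submodule.span ℂ (b '' Set.Iio m) :=
  @InnerProductSpace.span_gramSchmidt_Iio ℂ _ _ _ _ (Fin n) _ _ (inferInstance : WellFoundedLT (Fin n)) b m

theorem gso_orth (b : Fin n → EuclideanSpace ℂ (Fin n)) {a c : Fin n} (h : a ≠ c) :
    (inner ℂ (gso b a) (gso b c) : ℂ) = 0 :=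
  @InnerProductSpace.gramSchmidt_orthogonal ℂ _ _ _ _ (Fin n) _ _ (inferInstance : WellFoundedLT (Fin n)) b a c h

theorem sub_gso_mem (b : Fin n → EuclideanSpace ℂ (Fin n)) (m : Fin n) :
    b m - gso b m ∈ Submodule.span ℂ (b '' Set.Iio m) := by
  rw [← gso_span, gso_def]
  simp only [sub_sub_cancel]
  refine Submodule.sum_mem _ fun t ht => ?_
  exact Submodule.span_mono (Set.singleton_subset_iff.2
    (Set.mem_image_of_mem _ (Set.mem_Iio.mpr (Finset.mem_Iio.1 ht)))) (SetLike.coe_mem _)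

theorem inner_gso_zero (b : Fin n → EuclideanSpace ℂ (Fin n)) (m : Fin n)
    {y : EuclideanSpace ℂ (Fin n)} (hy : y ∈ Submodule.span ℂ (b '' Set.Iio m)) :
    (inner ℂ y (gso b m) : ℂ) = 0 := by
  rw [← gso_span] at hy
  induction hy using Submodule.span_induction with
  | mem x h => obtain ⟨t, ht, rfl⟩ := h; exact gso_orth b (ne_of_lt ht)
  | zero => simp
  | add x y _ _ hx hy => rw [inner_add_left, hx, hy, add_zero]
  | smul a x _ hx => rw [inner_smul_left, hx, mul_zero]

/-- The Gram-Schmidt vector minimizes the distance from `b m` to the span of earlier vectors. -/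
theorem gso_sq_le (b : Fin n → EuclideanSpace ℂ (Fin n)) (m : Fin n)
    {y : EuclideanSpace ℂ (Fin n)} (hy : y ∈ Submodule.span ℂ (b '' Set.Iio m)) :
    ‖gso b m‖ ^ 2 ≤ ‖b m - y‖ ^ 2 := by
  have hz : b m - y - gso b m ∈ Submodule.span ℂ (b '' Set.Iio m) := by
    have h2 := Submodule.sub_mem _ (sub_gso_mem b m) hy
    have he : b m - gso b m - y = b m - y - gso b m := by abel
    rwa [he] at h2
  have hinner : (inner ℂ (gso b m) (b m - y - gso b m) : ℂ) = 0 :=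
    inner_eq_zero_symm.mpr (inner_gso_zero b m hz)
  have hdecomp : b m - y = gso b m + (b m - y - gso b m) := by abel
  rw [hdecomp, norm_add_sq (𝕜 := ℂ), hinner]
  simp only [map_zero, mul_zero, add_zero]
  nlinarith [sq_nonneg ‖b m - y - gso b m‖, sq_abs ‖b m - y - gso b m‖]

theorem gso_unique (b : Fin n → EuclideanSpace ℂ (Fin n)) (m : Fin n)
    (x : EuclideanSpace ℂ (Fin n)) (h1 : b m - x ∈ Submodule.span ℂ (b '' Set.Iio m))
    (h2 : ∀ y ∈ Submodule.span ℂ (b '' Set.Iio m), (inner ℂ y x : ℂ) = 0) :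
    x = gso b m := by
  have hd : x - gso b m ∈ Submodule.span ℂ (b '' Set.Iio m) := by
    have h3 := Submodule.sub_mem _ (sub_gso_mem b m) h1
    have he : b m - gso b m - (b m - x) = x - gso b m := by abel
    rwa [he] at h3
  have h0 : (inner ℂ (x - gso b m) (x - gso b m) : ℂ) = 0 := by
    rw [inner_sub_right, h2 _ hd, inner_gso_zero b m hd, sub_zero]
  have := inner_self_eq_zero.mp h0
  linear_combination (norm := module) this

theorem gso_congr (b c : Fin n → EuclideanSpace ℂ (Fin n)) (m : Fin n) (h1 : b m = c m)
    (h2 : Submodule.span ℂ (b '' Set.Iio m) = Submodule.span ℂ (c '' Set.Iio m)) :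
    gso b m = gso c m :=
  gso_unique c m (gso b m) (by rw [← h1, ← h2]; exact sub_gso_mem b m)
    (fun y hy => inner_gso_zero b m (h2 ▸ hy))

theorem key_mem (b : Fin n → EuclideanSpace ℂ (Fin n)) (j i : Fin n) (hij : j.val + 1 = i.val) :
    b i - (gso b i + mu b i j • gso b j) ∈ Submodule.span ℂ (b '' Set.Iio j) := by
  have hIio : Finset.Iio i = insert j (Finset.Iio j) := by
    ext t
    simp only [Finset.mem_Iio, Finset.mem_insert, Fin.lt_def, ← hij, Fin.ext_iff]
    omega
  have hproj : (Submodule.orthogonalProjectionOnto (Submodule.span ℂ {gso b j}) (b i) :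
      EuclideanSpace ℂ (Fin n)) = mu b i j • gso b j := by
    rw [← Submodule.starProjection_apply, Submodule.starProjection_singleton]
    unfold mu
    norm_cast
  have hsum : b i - gso b i = ∑ t ∈ insert j (Finset.Iio j),
      (Submodule.orthogonalProjectionOnto (Submodule.span ℂ {gso b t}) (b i) : EuclideanSpace ℂ (Fin n)) := by
    rw [← hIio, gso_def, sub_sub_cancel]
  have hkey : b i - (gso b i + mu b i j • gso b j) = ∑ t ∈ Finset.Iio j,
      (Submodule.orthogonalProjectionOnto (Submodule.span ℂ {gso b t}) (b i) : EuclideanSpace ℂ (Fin n)) := by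
    have h4 : b i - (gso b i + mu b i j • gso b j)
        = (b i - gso b i) - mu b i j • gso b j := by abel
    rw [h4, hsum, Finset.sum_insert (by simp), hproj]
    abel
  rw [hkey, ← gso_span]
  refine Submodule.sum_mem _ fun t ht => ?_
  exact Submodule.span_mono (Set.singleton_subset_iff.2
    (Set.mem_image_of_mem _ (Set.mem_Iio.mpr (Finset.mem_Iio.1 ht)))) (SetLike.coe_mem _)

end Aux

theorem stmt11 (n : ℕ) (hn : 0 < n) (δ : ℝ) (hδ2 : δ ≤ 1)
    (b : Fin n → EuclideanSpace ℂ (Fin n)) (hb : LinearIndependent ℂ b)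
    (j i : Fin n) (hij : j.val + 1 = i.val)
    (hfail : ‖gso b i + mu b i j • gso b j‖^2 < δ * ‖gso b j‖^2) :
    Finset.sup' Finset.univ ⟨⟨0, hn⟩, Finset.mem_univ _⟩
      (fun m => ‖gso (b ∘ Equiv.swap j i) m‖^2) ≤
    Finset.sup' Finset.univ ⟨⟨0, hn⟩, Finset.mem_univ _⟩ (fun m => ‖gso b m‖^2) := by
  have hji : j < i := by rw [Fin.lt_def]; omega
  have hne : j ≠ i := ne_of_lt hji
  set σ := Equiv.swap j i with hσ
  set b' : Fin n → EuclideanSpace ℂ (Fin n) := b ∘ σ with hb'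
  have hbound : ∀ m' : Fin n, ‖gso b m'‖^2 ≤
      Finset.sup' Finset.univ ⟨⟨0, hn⟩, Finset.mem_univ _⟩ (fun m => ‖gso b m‖^2) :=
    fun m' => Finset.le_sup' (f := fun m => ‖gso b m‖^2) (Finset.mem_univ m')
  have hσj : σ j = i := Equiv.swap_apply_left j i
  have hσi : σ i = j := Equiv.swap_apply_right j i
  have hσt : ∀ t : Fin n, t ≠ j → t ≠ i → σ t = t := fun t h1 h2 =>
    Equiv.swap_apply_of_ne_of_ne h1 h2
  -- image of Iio j is unchanged
  have himgj : b' '' Set.Iio j = b '' Set.Iio j := by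
    refine Set.image_congr fun t ht => ?_
    have htj : t < j := ht
    have h1 : t ≠ j := ne_of_lt htj
    have h2 : t ≠ i := ne_of_lt (lt_trans htj hji)
    simp [hb', Function.comp, hσt t h1 h2]
  apply Finset.sup'_le
  intro m _
  rcases lt_trichotomy m j with hmj | rfl | hjm
  · -- m < j : Gram-Schmidt vector unchanged
    have himg : b' '' Set.Iio m = b '' Set.Iio m := by
      refine Set.image_congr fun t ht => ?_
      have htm : t < m := ht
      have h1 : t ≠ j := ne_of_lt (lt_trans htm hmj)
      have h2 : t ≠ i := ne_of_lt (lt_trans (lt_trans htm hmj) hji)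
      simp [hb', Function.comp, hσt t h1 h2]
    have hm1 : b' m = b m := by
      simp [hb', Function.comp, hσt m (ne_of_lt hmj) (ne_of_lt (lt_trans hmj hji))]
    have heq : gso b' m = gso b m := gso_congr b' b m hm1 (by rw [himg])
    rw [heq]; exact hbound m
  · -- m = j
    have hb'j : b' m = b i := by simp [hb', Function.comp, hσj]
    have hmem : b i - (gso b i + mu b i m • gso b m) ∈ Submodule.span ℂ (b' '' Set.Iio m) := by
      rw [himgj]; exact key_mem b m i hij
    have h1 : ‖gso b' m‖^2 ≤ ‖b' m - (b i - (gso b i + mu b i m • gso b m))‖^2 :=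
      gso_sq_le b' m hmem
    have h2 : b' m - (b i - (gso b i + mu b i m • gso b m))
        = gso b i + mu b i m • gso b m := by rw [hb'j]; abel
    rw [h2] at h1
    have h3 : δ * ‖gso b m‖^2 ≤ ‖gso b m‖^2 :=
      mul_le_of_le_one_left (by positivity) hδ2
    exact le_trans (le_trans h1 (le_trans (le_of_lt hfail) h3)) (hbound m)
  · -- j < m, so i ≤ m
    have him : i ≤ m := by
      rw [Fin.le_def]; rw [Fin.lt_def] at hjm; omega
    rcases eq_or_lt_of_le him with rfl | hlt
    · -- m = i
      have hb'i : b' i = b j := by simp [hb', Function.comp, hσi]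
      have hsub : b '' Set.Iio j ⊆ b' '' Set.Iio i := by
        rintro x ⟨t, ht, rfl⟩
        have htj : t < j := ht
        have h1 : t ≠ j := ne_of_lt htj
        have h2 : t ≠ i := ne_of_lt (lt_trans htj hji)
        exact ⟨t, lt_trans htj hji, by simp [hb', Function.comp, hσt t h1 h2]⟩
      have hmem : b j - gso b j ∈ Submodule.span ℂ (b' '' Set.Iio i) :=
        Submodule.span_mono hsub (sub_gso_mem b j)
      have h1 : ‖gso b' i‖^2 ≤ ‖b' i - (b j - gso b j)‖^2 := gso_sq_le b' i hmem
      have h2 : b' i - (b j - gso b j) = gso b j := by rw [hb'i]; abel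
      rw [h2] at h1
      exact le_trans h1 (hbound j)
    · -- i < m : Gram-Schmidt vector unchanged
      have hm1 : b' m = b m := by
        simp [hb', Function.comp, hσt m (ne_of_gt hjm) (ne_of_gt hlt)]
      have hσsymm : σ.symm = σ := Equiv.symm_swap j i
      have hset : ⇑σ '' Set.Iio m = Set.Iio m := by
        rw [Equiv.image_eq_preimage_symm, hσsymm]
        ext t
        show σ t < m ↔ t < m
        by_cases h1 : t = j
        · subst h1; rw [hσj]; constructor <;> intro _ <;> [exact hjm; exact hlt]
        · by_cases h2 : t = i
          · subst h2; rw [hσi]; constructor <;> intro _ <;> [exact hlt; exact hjm]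
          · rw [hσt t h1 h2]
      have himg : b' '' Set.Iio m = b '' Set.Iio m := by
        rw [hb', Set.image_comp, hset]
      have heq : gso b' m = gso b m := gso_congr b' b m hm1 (by rw [himg])
      rw [heq]; exact hbound m
end

section
/- For a lattice basis B with Gram-Schmidt vectors b̂ᵢ and dual basis B* = (B^{-1})^H J (J the column-reversing matrix), the Gram-Schmidt vectors of the dual satisfy ‖b̂ᵢ‖ = ‖b̂*_{n-i+1}‖^{-1} for all i; consequently A/a = A*/a*, where A, a (resp. A*, a*) are the max and min squared Gram-Schmidt norms of B (resp. B*). -/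
/-- The `i`-th column of a complex matrix, as a vector of `ℂⁿ`. -/
noncomputable def col {n : ℕ} (B : Matrix (Fin n) (Fin n) ℂ) (i : Fin n) :
    EuclideanSpace ℂ (Fin n) :=
  (WithLp.equiv 2 (Fin n → ℂ)).symm (fun x => B x i)

/-- B is complex LLL-reduced with parameter δ: size-reduced plus the Lovász condition. -/
def LLLReduced {n : ℕ} (δ : ℝ) (b : Fin n → EuclideanSpace ℂ (Fin n)) : Prop :=
  (∀ i j : Fin n, j < i → |(mu b i j).re| ≤ 1/2 ∧ |(mu b i j).im| ≤ 1/2) ∧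
  (∀ i j : Fin n, j.val + 1 = i.val →
    ‖gso b i‖^2 ≥ (δ - ‖mu b i j‖ ^ 2) * ‖gso b j‖^2)

/-- The column-reversing permutation matrix J. -/
def Jmat (n : ℕ) : Matrix (Fin n) (Fin n) ℂ :=
  fun x y => if Fin.rev x = y then 1 else 0

open Finset Submodule Set

instance finWFLT (n : ℕ) : WellFoundedLT (Fin n) := inferInstance

local notation "⟪" x ", " y "⟫" => @inner ℂ _ _ x y

variable {n : ℕ}

lemma gso_eq (f : Fin n → EuclideanSpace ℂ (Fin n)) :
    gso f = @InnerProductSpace.gramSchmidt ℂ _ _ _ _ (Fin n) _ _ (inferInstance : WellFoundedLT (Fin n)) f := rfl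

-- defeq wrappers
lemma gso_inv_triangular (f : Fin n → EuclideanSpace ℂ (Fin n)) {i j : Fin n} (hij : i < j) :
    ⟪gso f j, f i⟫ = 0 := InnerProductSpace.gramSchmidt_inv_triangular ℂ f hij

lemma gso_orthogonal (f : Fin n → EuclideanSpace ℂ (Fin n)) {a b : Fin n} (h : a ≠ b) :
    ⟪gso f a, gso f b⟫ = 0 := InnerProductSpace.gramSchmidt_orthogonal ℂ f h

lemma gso_def' (f : Fin n → EuclideanSpace ℂ (Fin n)) (k : Fin n) :
    f k = gso f k + ∑ j ∈ Finset.Iio k, ((ℂ ∙ gso f j).starProjection (f k) :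
      EuclideanSpace ℂ (Fin n)) := InnerProductSpace.gramSchmidt_def' ℂ f k

lemma gso_mem_span (f : Fin n → EuclideanSpace ℂ (Fin n)) {i j : Fin n} (hij : i ≤ j) :
    gso f i ∈ span ℂ (f '' Set.Iic j) := InnerProductSpace.gramSchmidt_mem_span ℂ f hij

lemma gso_ne_zero {f : Fin n → EuclideanSpace ℂ (Fin n)} (h : LinearIndependent ℂ f)
    (i : Fin n) : gso f i ≠ 0 := InnerProductSpace.gramSchmidt_ne_zero i h

lemma gso_inner_self (f : Fin n → EuclideanSpace ℂ (Fin n)) (i : Fin n) :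
    ⟪gso f i, f i⟫ = ((‖gso f i‖ : ℝ) : ℂ) ^ 2 := by
  conv_lhs => rw [gso_def' f i]
  rw [inner_add_right]
  have h2 : ∑ j ∈ Finset.Iio i, ⟪gso f i, ((ℂ ∙ gso f j).starProjection (f i) :
      EuclideanSpace ℂ (Fin n))⟫ = 0 := by
    refine Finset.sum_eq_zero fun j hj => ?_
    rw [starProjection_singleton, inner_smul_right,
      gso_orthogonal f (Finset.mem_Iio.mp hj).ne', mul_zero]
  rw [inner_sum, h2, add_zero, inner_self_eq_norm_sq_to_K]
  norm_cast


lemma gs_unique {n : ℕ} (f : Fin n → EuclideanSpace ℂ (Fin n)) (k : Fin n)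
    (v : EuclideanSpace ℂ (Fin n))
    (h1 : f k - v ∈ span ℂ (f '' Set.Iio k))
    (h2 : ∀ j, j < k → ⟪f j, v⟫ = 0) :
    gso f k = v := by
  rw [gso_eq]
  set S := span ℂ (f '' Set.Iio k) with hS
  have hv : v ∈ Sᗮ := by
    rw [Submodule.mem_orthogonal]
    intro u hu
    induction hu using Submodule.span_induction with
    | mem x hx => obtain ⟨j, hj, rfl⟩ := hx; exact h2 j hj
    | zero => simp
    | add x y _ _ hx hy => simp [inner_add_left, hx, hy]
    | smul a x _ hx => simp [inner_smul_left, hx]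
  have hg : InnerProductSpace.gramSchmidt ℂ f k ∈ Sᗮ := by
    rw [Submodule.mem_orthogonal]
    intro u hu
    induction hu using Submodule.span_induction with
    | mem x hx =>
      obtain ⟨j, hj, rfl⟩ := hx
      rw [inner_eq_zero_symm]
      exact InnerProductSpace.gramSchmidt_inv_triangular ℂ f hj
    | zero => simp
    | add x y _ _ hx hy => simp [inner_add_left, hx, hy]
    | smul a x _ hx => simp [inner_smul_left, hx]
  have hgs : f k - InnerProductSpace.gramSchmidt ℂ f k ∈ S := by
    rw [InnerProductSpace.gramSchmidt_def ℂ f k, sub_sub_cancel]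
    refine Submodule.sum_mem _ fun j hj => ?_
    have hle : (ℂ ∙ InnerProductSpace.gramSchmidt ℂ f j) ≤ S := by
      rw [hS, ← InnerProductSpace.span_gramSchmidt_Iio ℂ f k]
      refine Submodule.span_le.mpr ?_
      rintro x ⟨rfl⟩
      exact Submodule.subset_span (Set.mem_image_of_mem _ (Finset.mem_Iio.mp hj))
    exact hle (Submodule.starProjection_apply_mem _ _)
  have hmem : InnerProductSpace.gramSchmidt ℂ f k - v ∈ S := by
    have h' := Submodule.sub_mem S h1 hgs
    simpa using h'
  have hmem' : InnerProductSpace.gramSchmidt ℂ f k - v ∈ Sᗮ := Submodule.sub_mem _ hg hv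
  have hz : InnerProductSpace.gramSchmidt ℂ f k - v = 0 := by
    have h0 : InnerProductSpace.gramSchmidt ℂ f k - v ∈ S ⊓ Sᗮ := Submodule.mem_inf.mpr ⟨hmem, hmem'⟩
    rwa [(Submodule.orthogonal_disjoint S).eq_bot, Submodule.mem_bot] at h0
  exact sub_eq_zero.mp hz

lemma col_mul_J {n : ℕ} (M : Matrix (Fin n) (Fin n) ℂ) :
    col (M * Jmat n) = fun j => col M (Fin.rev j) := by
  funext j
  ext x
  show (M * Jmat n) x j = M x (Fin.rev j)
  rw [Matrix.mul_apply]
  rw [Finset.sum_eq_single (Fin.rev j)]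
  · simp [Jmat]
  · intro y _ hy
    simp only [Jmat]
    rw [if_neg, mul_zero]
    intro h
    exact hy (by rw [← h, Fin.rev_rev])
  · simp

lemma dual_inner {n : ℕ} (B : Matrix (Fin n) (Fin n) ℂ) (hB : IsUnit B.det) (i j : Fin n) :
    ⟪col B j, col B⁻¹.conjTranspose i⟫ = if i = j then 1 else 0 := by
  have hBinv : B⁻¹ * B = 1 := Matrix.nonsing_inv_mul B hB
  have h1 : ⟪col B j, col B⁻¹.conjTranspose i⟫
      = ∑ x, (starRingEnd ℂ) (B x j) * (starRingEnd ℂ) (B⁻¹ i x) := by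
    simp [PiLp.inner_apply, RCLike.inner_apply, col, Matrix.conjTranspose_apply]
    exact Finset.sum_congr rfl fun _ _ => mul_comm _ _
  rw [h1]
  have h2 : ∑ x, (starRingEnd ℂ) (B x j) * (starRingEnd ℂ) (B⁻¹ i x)
      = (starRingEnd ℂ) ((B⁻¹ * B) i j) := by
    rw [Matrix.mul_apply, map_sum]
    congr 1; funext x
    rw [← map_mul, mul_comm]
  rw [h2, hBinv]
  simp [Matrix.one_apply]

lemma repr_dual {n : ℕ} (B : Matrix (Fin n) (Fin n) ℂ) (hB : IsUnit B.det)
    (w : EuclideanSpace ℂ (Fin n)) :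
    ∑ k, ⟪col B k, w⟫ • col B⁻¹.conjTranspose k = w := by
  have hBB : B * B⁻¹ = 1 := Matrix.mul_nonsing_inv B hB
  ext x
  have happ : (∑ k, ⟪col B k, w⟫ • col B⁻¹.conjTranspose k) x
      = ∑ k, ⟪col B k, w⟫ * (starRingEnd ℂ) (B⁻¹ k x) := by
    rw [WithLp.ofLp_sum, Finset.sum_apply]; rfl
  rw [happ]
  have hin : ∀ k, ⟪col B k, w⟫ = ∑ y, (starRingEnd ℂ) (B y k) * w y := by
    intro k
    simp [PiLp.inner_apply, RCLike.inner_apply, col]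
    exact Finset.sum_congr rfl fun _ _ => mul_comm _ _
  calc ∑ k, ⟪col B k, w⟫ * (starRingEnd ℂ) (B⁻¹ k x)
      = ∑ k, ∑ y, ((starRingEnd ℂ) (B y k) * w y) * (starRingEnd ℂ) (B⁻¹ k x) := by
        simp_rw [hin, Finset.sum_mul]
    _ = ∑ y, ∑ k, ((starRingEnd ℂ) (B y k) * w y) * (starRingEnd ℂ) (B⁻¹ k x) :=
        Finset.sum_comm
    _ = ∑ y, (starRingEnd ℂ) ((B * B⁻¹) y x) * w y := by
        congr 1; funext y
        rw [Matrix.mul_apply, map_sum, Finset.sum_mul]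
        congr 1; funext k
        rw [map_mul]; ring
    _ = w x := by rw [hBB]; simp [Matrix.one_apply]


lemma key (B : Matrix (Fin n) (Fin n) ℂ) (hB : IsUnit B.det) (i : Fin n) :
    gso (col (B⁻¹.conjTranspose * Jmat n)) (Fin.rev i)
      = (((‖gso (col B) i‖ : ℝ) : ℂ) ^ 2)⁻¹ • gso (col B) i := by
  have hli : LinearIndependent ℂ (col B) := by
    have h0 : LinearIndependent ℂ (fun i => B.transpose i) :=
      Matrix.linearIndependent_cols_iff_isUnit.mpr ((Matrix.isUnit_iff_isUnit_det B).mpr hB)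
    exact h0.map' (WithLp.linearEquiv 2 ℂ (Fin n → ℂ)).symm.toLinearMap
      (LinearEquiv.ker _)
  set g : EuclideanSpace ℂ (Fin n) := gso (col B) i with hg
  set r : ℂ := ((‖g‖ : ℝ) : ℂ) ^ 2 with hr
  have hgne : g ≠ 0 := gso_ne_zero hli i
  have hrne : r ≠ 0 := by
    rw [hr]
    simp only [ne_eq, pow_eq_zero_iff, Complex.ofReal_eq_zero, norm_eq_zero]
    simp [hgne]
  set v : EuclideanSpace ℂ (Fin n) := r⁻¹ • g with hv
  set c : Fin n → EuclideanSpace ℂ (Fin n) := col B⁻¹.conjTranspose with hc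
  rw [col_mul_J]
  -- inner products of b j with v
  have hbv : ∀ j : Fin n, j ≤ i → ⟪col B j, v⟫ = if i = j then 1 else 0 := by
    intro j hj
    rcases lt_or_eq_of_le hj with hlt | rfl
    · rw [hv, inner_smul_right]
      have : ⟪col B j, g⟫ = 0 := by
        rw [inner_eq_zero_symm]
        exact gso_inv_triangular (col B) hlt
      rw [this, mul_zero, if_neg (by exact fun h => absurd h.symm hlt.ne)]
    · rw [hv, inner_smul_right]
      have : ⟪col B j, g⟫ = r := by
        rw [← inner_conj_symm, hg, gso_inner_self, hr]
        simp [← hg, Complex.conj_ofReal]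
      rw [this, inv_mul_cancel₀ hrne, if_pos rfl]
  apply gs_unique
  · -- membership
    simp only [Fin.rev_rev]
    have himg : (fun j => c (Fin.rev j)) '' Set.Iio (Fin.rev i) = c '' Set.Ioi i := by
      ext x
      constructor
      · rintro ⟨j, hj, rfl⟩
        refine ⟨Fin.rev j, ?_, rfl⟩
        rw [Set.mem_Ioi, ← Fin.rev_rev i]
        exact Fin.rev_lt_rev.mpr hj
      · rintro ⟨k, hk, rfl⟩
        refine ⟨Fin.rev k, ?_, by simp⟩
        rw [Set.mem_Iio]
        exact Fin.rev_lt_rev.mpr hk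
    rw [himg]
    have hrepr := repr_dual B hB (c i - v)
    rw [← hrepr]
    refine Submodule.sum_mem _ fun k _ => ?_
    by_cases hk : k ≤ i
    · have hz : ⟪col B k, c i - v⟫ = 0 := by
        rw [inner_sub_right, hbv k hk, hc, dual_inner B hB, sub_self]
      rw [hz, zero_smul]
      exact Submodule.zero_mem _
    · exact Submodule.smul_mem _ _ (Submodule.subset_span
        ⟨k, Set.mem_Ioi.mpr (lt_of_not_ge hk), rfl⟩)
  · -- orthogonality
    intro j hj
    have hik : i < Fin.rev j := by
      rw [← Fin.rev_rev i]
      exact Fin.rev_lt_rev.mpr hj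
    rw [hv, inner_smul_right]
    have : ⟪c (Fin.rev j), g⟫ = 0 := by
      rw [← Submodule.mem_orthogonal_singleton_iff_inner_right]
      have hle : span ℂ (col B '' Set.Iic i) ≤ (ℂ ∙ c (Fin.rev j))ᗮ := by
        rw [Submodule.span_le]
        rintro x ⟨m, hm, rfl⟩
        rw [SetLike.mem_coe, Submodule.mem_orthogonal_singleton_iff_inner_left,
          hc, dual_inner B hB]
        rw [if_neg]
        intro h
        rw [← h] at hm
        exact absurd hik (not_lt.mpr hm)
      exact hle (gso_mem_span (col B) le_rfl)
    rw [this, mul_zero]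

lemma key_norm (B : Matrix (Fin n) (Fin n) ℂ) (hB : IsUnit B.det) (i : Fin n) :
    ‖gso (col B) i‖ = ‖gso (col (B⁻¹.conjTranspose * Jmat n)) (Fin.rev i)‖⁻¹ := by
  have hli : LinearIndependent ℂ (col B) := by
    have h0 : LinearIndependent ℂ (fun i => B.transpose i) :=
      Matrix.linearIndependent_cols_iff_isUnit.mpr ((Matrix.isUnit_iff_isUnit_det B).mpr hB)
    exact h0.map' (WithLp.linearEquiv 2 ℂ (Fin n → ℂ)).symm.toLinearMap (LinearEquiv.ker _)
  have hgne : gso (col B) i ≠ 0 := gso_ne_zero hli i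
  have hpos : 0 < ‖gso (col B) i‖ := norm_pos_iff.mpr hgne
  rw [key B hB i, norm_smul, norm_inv, norm_pow, Complex.norm_real, Real.norm_eq_abs,
    abs_of_nonneg (norm_nonneg _)]
  rw [mul_inv, inv_inv, pow_two, mul_assoc, mul_inv_cancel₀ hpos.ne', mul_one]

lemma sup'_rev (h : Fin n → ℝ) (hne : (Finset.univ : Finset (Fin n)).Nonempty) :
    Finset.sup' Finset.univ hne (fun m => h (Fin.rev m)) = Finset.sup' Finset.univ hne h := by
  apply le_antisymm
  · exact Finset.sup'_le _ _ fun m _ => Finset.le_sup' h (Finset.mem_univ (Fin.rev m))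
  · refine Finset.sup'_le _ _ fun m _ => ?_
    have := Finset.le_sup' (fun m => h (Fin.rev m)) (Finset.mem_univ (Fin.rev m))
    simp only [Fin.rev_rev] at this; exact this

lemma inf'_rev (h : Fin n → ℝ) (hne : (Finset.univ : Finset (Fin n)).Nonempty) :
    Finset.inf' Finset.univ hne (fun m => h (Fin.rev m)) = Finset.inf' Finset.univ hne h := by
  apply le_antisymm
  · refine Finset.le_inf' _ _ fun m _ => ?_
    have := Finset.inf'_le (fun m => h (Fin.rev m)) (Finset.mem_univ (Fin.rev m))
    simp only [Fin.rev_rev] at this; exact this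
  · exact Finset.le_inf' _ _ fun m _ => Finset.inf'_le h (Finset.mem_univ (Fin.rev m))

lemma sup'_inv (u : Fin n → ℝ) (hne : (Finset.univ : Finset (Fin n)).Nonempty)
    (hpos : ∀ m, 0 < u m) :
    Finset.sup' Finset.univ hne (fun m => (u m)⁻¹)
      = (Finset.inf' Finset.univ hne u)⁻¹ := by
  have hinf : 0 < Finset.inf' Finset.univ hne u :=
    (Finset.lt_inf'_iff hne).mpr fun m _ => hpos m
  apply le_antisymm
  · refine Finset.sup'_le _ _ fun m _ => ?_
    exact inv_anti₀ hinf (Finset.inf'_le _ (Finset.mem_univ m))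
  · obtain ⟨m0, _, hm0⟩ := Finset.exists_mem_eq_inf' hne u
    rw [hm0]
    exact Finset.le_sup' (fun m => (u m)⁻¹) (Finset.mem_univ m0)

lemma inf'_inv (u : Fin n → ℝ) (hne : (Finset.univ : Finset (Fin n)).Nonempty)
    (hpos : ∀ m, 0 < u m) :
    Finset.inf' Finset.univ hne (fun m => (u m)⁻¹)
      = (Finset.sup' Finset.univ hne u)⁻¹ := by
  apply le_antisymm
  · obtain ⟨m0, _, hm0⟩ := Finset.exists_mem_eq_sup' hne u
    rw [hm0]
    exact Finset.inf'_le (fun m => (u m)⁻¹) (Finset.mem_univ m0)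
  · refine Finset.le_inf' _ _ fun m _ => ?_
    exact inv_anti₀ (hpos m) (Finset.le_sup' u (Finset.mem_univ m))

theorem stmt15 (n : ℕ) (hn : 0 < n) (B : Matrix (Fin n) (Fin n) ℂ) (hB : IsUnit B.det) :
    (∀ i : Fin n,
      ‖gso (col B) i‖ = ‖gso (col (B⁻¹.conjTranspose * Jmat n)) (Fin.rev i)‖⁻¹) ∧
    (Finset.sup' Finset.univ ⟨⟨0, hn⟩, Finset.mem_univ _⟩ (fun m => ‖gso (col B) m‖^2)) /
      (Finset.inf' Finset.univ ⟨⟨0, hn⟩, Finset.mem_univ _⟩ (fun m => ‖gso (col B) m‖^2)) =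
    (Finset.sup' Finset.univ ⟨⟨0, hn⟩, Finset.mem_univ _⟩
        (fun m => ‖gso (col (B⁻¹.conjTranspose * Jmat n)) m‖^2)) /
      (Finset.inf' Finset.univ ⟨⟨0, hn⟩, Finset.mem_univ _⟩
        (fun m => ‖gso (col (B⁻¹.conjTranspose * Jmat n)) m‖^2)) := by
  have hli : LinearIndependent ℂ (col B) := by
    have h0 : LinearIndependent ℂ (fun i => B.transpose i) :=
      Matrix.linearIndependent_cols_iff_isUnit.mpr ((Matrix.isUnit_iff_isUnit_det B).mpr hB)
    exact h0.map' (WithLp.linearEquiv 2 ℂ (Fin n → ℂ)).symm.toLinearMap (LinearEquiv.ker _)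
  refine ⟨fun i => key_norm B hB i, ?_⟩
  set hne : (Finset.univ : Finset (Fin n)).Nonempty := ⟨⟨0, hn⟩, Finset.mem_univ _⟩
  set u : Fin n → ℝ := fun m => ‖gso (col B) m‖ ^ 2 with hu
  have hpos : ∀ m, 0 < u m := fun m =>
    pow_pos (norm_pos_iff.mpr (gso_ne_zero hli m)) 2
  have hd : (fun m => ‖gso (col (B⁻¹.conjTranspose * Jmat n)) m‖^2)
      = fun m => (u (Fin.rev m))⁻¹ := by
    funext m
    have h1 := key_norm B hB (Fin.rev m)
    rw [Fin.rev_rev] at h1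
    have h2 : ‖gso (col (B⁻¹.conjTranspose * Jmat n)) m‖ = ‖gso (col B) (Fin.rev m)‖⁻¹ := by
      rw [h1, inv_inv]
    rw [h2, hu]
    rw [← inv_pow]
  rw [hd]
  have hrw : ∀ hne' : (Finset.univ : Finset (Fin n)).Nonempty, True := fun _ => trivial
  rw [show (fun m => (u (Fin.rev m))⁻¹) = (fun m => ((fun k => (u k)⁻¹) (Fin.rev m))) from rfl]
  rw [sup'_rev (fun k => (u k)⁻¹) hne, inf'_rev (fun k => (u k)⁻¹) hne,
    sup'_inv u hne hpos, inf'_inv u hne hpos]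
  have hS : 0 < Finset.sup' Finset.univ hne u :=
    lt_of_lt_of_le (hpos ⟨0, hn⟩) (Finset.le_sup' u (Finset.mem_univ _))
  have hs : 0 < Finset.inf' Finset.univ hne u :=
    (Finset.lt_inf'_iff hne).mpr fun m _ => hpos m
  rw [div_eq_div_iff hs.ne' (inv_ne_zero hS.ne')]
  rw [mul_inv_cancel₀ hS.ne', inv_mul_cancel₀ hs.ne']
end
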